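/- arXiv:2103.05816 — 3 statements merged into one kernel-verified Lean document; each statement's English description precedes it below -/
import Mathlib

section
/- If G is a graph with χ(G) ≥ 3, and G has a proper coloring using χ(G) colors in which at least one color class has size at least 4, then B(G) ≥ 4. -/
open Finset

variable {V : Type*}

/-- A proper coloring given as a function to ℕ. -/
def IsProperColoring (G : SimpleGraph V) (c : V → ℕ) : Prop :=
  ∀ ⦃u v⦄, G.Adj u v → c u ≠ c v

variable [Fintype V] [DecidableEq V]

/-- Two colorings use every color the same number of times. -/
def SameColorCounts (c c' : V → ℕ) : Prop :=
  ∀ k : ℕ, (univ.filter fun v => c v = k).card = (univ.filter fun v => c' v = k).card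

/-- The number of vertices on which two colorings differ. -/
def recolorCount (c c' : V → ℕ) : ℕ := (univ.filter fun v => c v ≠ c' v).card

/-- The ℕ-valued chromatic number. -/
noncomputable def chromNum (G : SimpleGraph V) : ℕ := G.chromaticNumber.toNat

/-- A proper coloring of `G` using exactly `χ(G)` colors. -/
noncomputable def IsOptimalColoring (G : SimpleGraph V) (f : V → ℕ) : Prop :=
  IsProperColoring G f ∧ (univ.image f).card = chromNum G

/-- The villainy of a coloring `c`: the least number of vertices that must be
recolored to obtain a proper coloring using each color as often as `c` does. -/
noncomputable def colVillainy (G : SimpleGraph V) (c : V → ℕ) : ℕ :=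
  sInf {n | ∃ c', IsProperColoring G c' ∧ SameColorCounts c c' ∧ recolorCount c c' = n}

/-- `c` is a permutation of the coloring `f`. -/
def IsPermutationOf (c f : V → ℕ) : Prop := ∃ σ : Equiv.Perm V, c = f ∘ σ

/-- The villainy of `G`: the maximum villainy over all permutations of optimal
proper colorings of `G`. -/
noncomputable def villainy (G : SimpleGraph V) : ℕ :=
  sSup {n | ∃ f c, IsOptimalColoring G f ∧ IsPermutationOf c f ∧ colVillainy G c = n}

/-! ### Auxiliary lemmas -/

/-- A permutation mapping `W` into `T`, given `|W| = |T|`. -/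
lemma exists_perm_maps (W T : Finset V) (h : W.card = T.card) :
    ∃ σ : Equiv.Perm V, ∀ v ∈ W, σ v ∈ T := by
  classical
  have hc : (Wᶜ).card = (Tᶜ).card := by simp [Finset.card_compl, h]
  let e1 := Finset.equivOfCardEq h
  let e2 := Finset.equivOfCardEq hc
  let g : V → V := fun v =>
    if hv : v ∈ W then (e1 ⟨v, hv⟩ : V) else (e2 ⟨v, by simpa using hv⟩ : V)
  have hmem1 : ∀ (v) (hv : v ∈ W), g v ∈ T := by
    intro v hv; simp only [g, dif_pos hv]; exact (e1 ⟨v, hv⟩).2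
  have hmem2 : ∀ (v) (hv : v ∉ W), g v ∈ Tᶜ := by
    intro v hv; simp only [g, dif_neg hv]; exact (e2 ⟨v, by simpa using hv⟩).2
  have hginj : Function.Injective g := by
    intro a b hab
    by_cases ha : a ∈ W <;> by_cases hb : b ∈ W
    · have := hab
      simp only [g, dif_pos ha, dif_pos hb] at this
      have : e1 ⟨a, ha⟩ = e1 ⟨b, hb⟩ := Subtype.ext this
      simpa using congrArg Subtype.val (e1.injective this)
    · exact absurd (hab ▸ hmem1 a ha) (by simpa using hmem2 b hb)
    · exact absurd (hab ▸ hmem2 a ha) (by simpa using hmem1 b hb)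
    · have := hab
      simp only [g, dif_neg ha, dif_neg hb] at this
      have : e2 ⟨a, by simpa using ha⟩ = e2 ⟨b, by simpa using hb⟩ := Subtype.ext this
      simpa using congrArg Subtype.val (e2.injective this)
  refine ⟨Equiv.ofBijective g ((Finite.injective_iff_bijective).mp hginj), ?_⟩
  intro v hv
  exact hmem1 v hv

/-- `f ∘ σ` uses every color as often as `f`. -/
lemma sameColorCounts_comp (f : V → ℕ) (σ : Equiv.Perm V) :
    SameColorCounts (f ∘ σ) f := by
  intro m
  refine Finset.card_bij (fun v _ => σ v) ?_ ?_ ?_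
  · intro v hv
    simp only [Finset.mem_filter, Function.comp_apply] at hv ⊢
    exact ⟨mem_univ _, hv.2⟩
  · intro a _ b _ hab
    exact σ.injective hab
  · intro w hw
    refine ⟨σ.symm w, ?_, by simp⟩
    simp only [Finset.mem_filter, Function.comp_apply, Equiv.apply_symm_apply] at hw ⊢
    exact ⟨mem_univ _, hw.2⟩

/-- The villainy set is bounded above by the number of vertices. -/
lemma villainy_bddAbove (G : SimpleGraph V) :
    BddAbove {n | ∃ f c, IsOptimalColoring G f ∧ IsPermutationOf c f ∧ colVillainy G c = n} := by
  refine ⟨Fintype.card V, ?_⟩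
  rintro n ⟨f, c, hf, ⟨σ, rfl⟩, rfl⟩
  have hmem : recolorCount (f ∘ σ) f ∈
      {n | ∃ c', IsProperColoring G c' ∧ SameColorCounts (f ∘ σ) c' ∧
        recolorCount (f ∘ σ) c' = n} :=
    ⟨f, hf.1, sameColorCounts_comp f σ, rfl⟩
  refine (Nat.sInf_le hmem).trans ?_
  exact (Finset.card_filter_le _ _).trans (by simp)

/-- In an optimal coloring, there is an edge between any two color classes. -/
lemma exists_edge_between (G : SimpleGraph V) (f : V → ℕ) (hf : IsOptimalColoring G f)
    (hchi : 1 ≤ chromNum G)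
    (p q : ℕ) (hp : p ∈ univ.image f) (hq : q ∈ univ.image f) (hpq : p ≠ q) :
    ∃ u v, G.Adj u v ∧ f u = p ∧ f v = q := by
  classical
  by_contra hcon
  push_neg at hcon
  set g : V → ℕ := fun v => if f v = q then p else f v with hg
  have hgproper : IsProperColoring G g := by
    intro u v huv heq
    by_cases hu : f u = q <;> by_cases hv : f v = q <;>
      simp only [hg, hu, hv, if_pos, if_neg, if_true, if_false] at heq
    · exact hf.1 huv (hu.trans hv.symm)
    · exact hcon v u huv.symm heq.symm hu
    · exact hcon u v huv heq hv
    · exact hf.1 huv heq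
  have hsub : univ.image g ⊆ (univ.image f).erase q := by
    intro a ha
    obtain ⟨v, -, hv⟩ := Finset.mem_image.mp ha
    by_cases hvq : f v = q
    · simp only [hg, if_pos hvq] at hv
      exact Finset.mem_erase.mpr ⟨hv ▸ hpq, hv ▸ hp⟩
    · simp only [hg, if_neg hvq] at hv
      exact Finset.mem_erase.mpr ⟨hv ▸ hvq, hv ▸ Finset.mem_image_of_mem f (mem_univ v)⟩
  have hcard : (univ.image g).card ≤ chromNum G - 1 := by
    calc (univ.image g).card ≤ ((univ.image f).erase q).card := Finset.card_le_card hsub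
    _ = (univ.image f).card - 1 := Finset.card_erase_of_mem hq
    _ = chromNum G - 1 := by rw [hf.2]
  have hcol : G.Colorable ((univ.image g).card) := by
    have C : G.Coloring ((univ.image g) : Finset ℕ) :=
      SimpleGraph.Coloring.mk (fun v => ⟨g v, Finset.mem_image_of_mem g (mem_univ v)⟩)
        (fun {u v} huv => by
          intro heq
          exact hgproper huv (congrArg Subtype.val heq))
    simpa using C.colorable
  have hle : G.chromaticNumber ≤ (chromNum G - 1 : ℕ) :=
    (hcol.mono hcard).chromaticNumber_le
  have : chromNum G ≤ chromNum G - 1 := by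
    have := ENat.toNat_le_toNat hle (by simp)
    simpa only [chromNum, ENat.toNat_coe] using this
  omega

/-- Key lemma: if some set `W` of at most 4 vertices carries edges which cannot all be
covered by a single vertex, and some color class has at least 4 vertices,
then the villainy of `G` is at least 4. -/
lemma key_lemma (G : SimpleGraph V) (f : V → ℕ) (hf : IsOptimalColoring G f)
    (k : ℕ) (hk : 4 ≤ (univ.filter fun v => f v = k).card)
    (W : Finset V) (hWcard : W.card ≤ 4)
    (hcov : ∀ S : Finset V,
      (∀ u ∈ W, ∀ v ∈ W, G.Adj u v → u ∈ S ∨ v ∈ S) →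
      ∃ s₁ ∈ S, ∃ s₂ ∈ S, s₁ ≠ s₂ ∧ s₁ ∈ W ∧ s₂ ∈ W) :
    4 ≤ villainy G := by
  classical
  set Ak := (univ.filter fun v => f v = k) with hAk
  obtain ⟨T, hTsub, hTcard⟩ := Finset.exists_subset_card_eq (hWcard.trans hk)
  obtain ⟨σ, hσ⟩ := exists_perm_maps W T hTcard.symm
  set c : V → ℕ := f ∘ σ with hc
  have hcW : ∀ v ∈ W, c v = k := by
    intro v hv
    have := hTsub (hσ v hv)
    simpa [hAk, hc] using (Finset.mem_filter.mp this).2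
  have hvil : 4 ≤ colVillainy G c := by
    refine le_csInf ⟨recolorCount c f, f, hf.1, sameColorCounts_comp f σ, rfl⟩ ?_
    rintro n ⟨c', hc'prop, hsame, rfl⟩
    by_contra hlt
    push_neg at hlt
    set S := (univ.filter fun v => c v ≠ c' v) with hS
    have hScard : S.card ≤ 3 := by
      have : recolorCount c c' = S.card := rfl
      omega
    have heqoff : ∀ v, v ∉ S → c v = c' v := by
      intro v hv
      by_contra hne
      exact hv (Finset.mem_filter.mpr ⟨mem_univ v, hne⟩)
    obtain ⟨s₁, hs₁, s₂, hs₂, hne, hs₁W, hs₂W⟩ := hcov S (by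
      intro u hu v hv huv
      by_contra hcon
      push_neg at hcon
      have h1 : c' u = k := (heqoff u hcon.1).symm.trans (hcW u hu)
      have h2 : c' v = k := (heqoff v hcon.2).symm.trans (hcW v hv)
      exact hc'prop huv (h1.trans h2.symm))
    have hcount : (S.filter (fun v => c v = k)).card = (S.filter (fun v => c' v = k)).card := by
      have hsplit : ∀ (d : V → ℕ), (univ.filter fun v => d v = k) =
          S.filter (fun v => d v = k) ∪ Sᶜ.filter (fun v => d v = k) := by
        intro d
        rw [← Finset.filter_union, Finset.union_compl]
      have hdisj : ∀ (d : V → ℕ),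
          Disjoint (S.filter (fun v => d v = k)) (Sᶜ.filter (fun v => d v = k)) := by
        intro d
        exact Finset.disjoint_filter_filter disjoint_compl_right
      have hoff : Sᶜ.filter (fun v => c v = k) = Sᶜ.filter (fun v => c' v = k) := by
        apply Finset.filter_congr
        intro v hv
        rw [heqoff v (by simpa using hv)]
      have := hsame k
      rw [hsplit c, hsplit c', Finset.card_union_of_disjoint (hdisj c),
        Finset.card_union_of_disjoint (hdisj c'), hoff] at this
      omega
    have hAB : Disjoint (S.filter (fun v => c v = k)) (S.filter (fun v => c' v = k)) := by
      rw [Finset.disjoint_left]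
      intro v hvA hvB
      have h1 := (Finset.mem_filter.mp hvA).2
      have h2 := (Finset.mem_filter.mp hvB).2
      have h3 := (Finset.mem_filter.mp (Finset.mem_filter.mp hvA).1).2
      exact h3 (h1.trans h2.symm)
    have hA2 : 2 ≤ (S.filter (fun v => c v = k)).card := by
      have hsub : {s₁, s₂} ⊆ S.filter (fun v => c v = k) := by
        intro v hv
        rcases Finset.mem_insert.mp hv with rfl | hv
        · exact Finset.mem_filter.mpr ⟨hs₁, hcW v hs₁W⟩
        · rcases Finset.mem_singleton.mp hv with rfl
          exact Finset.mem_filter.mpr ⟨hs₂, hcW v hs₂W⟩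
      calc 2 = ({s₁, s₂} : Finset V).card := by
            rw [Finset.card_insert_of_notMem (by simpa using hne), Finset.card_singleton]
      _ ≤ (S.filter (fun v => c v = k)).card := Finset.card_le_card hsub
    have hcup : ((S.filter (fun v => c v = k)) ∪ (S.filter (fun v => c' v = k))).card ≤ S.card :=
      Finset.card_le_card (by
        intro v hv
        rcases Finset.mem_union.mp hv with h | h
        · exact (Finset.mem_filter.mp h).1
        · exact (Finset.mem_filter.mp h).1)
    rw [Finset.card_union_of_disjoint hAB] at hcup
    omega
  have hmem : colVillainy G c ∈
      {n | ∃ f c, IsOptimalColoring G f ∧ IsPermutationOf c f ∧ colVillainy G c = n} :=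
    ⟨f, c, hf, ⟨σ, rfl⟩, rfl⟩
  exact hvil.trans (le_csSup (villainy_bddAbove G) hmem)

/-- Case of two disjoint edges. -/
lemma key_matching (G : SimpleGraph V) (f : V → ℕ) (hf : IsOptimalColoring G f)
    (k : ℕ) (hk : 4 ≤ (univ.filter fun v => f v = k).card)
    (a b x y : V) (hab : G.Adj a b) (hxy : G.Adj x y)
    (hax : a ≠ x) (hay : a ≠ y) (hbx : b ≠ x) (hby : b ≠ y) :
    4 ≤ villainy G := by
  refine key_lemma G f hf k hk {a, b, x, y} ?_ ?_
  · refine le_trans (Finset.card_insert_le _ _) (Nat.succ_le_succ ?_)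
    refine le_trans (Finset.card_insert_le _ _) (Nat.succ_le_succ ?_)
    refine le_trans (Finset.card_insert_le _ _) (Nat.succ_le_succ ?_)
    simp
  · intro S hS
    have h1 := hS a (by simp) b (by simp) hab
    have h2 := hS x (by simp) y (by simp) hxy
    rcases h1 with h | h <;> rcases h2 with h' | h'
    · exact ⟨a, h, x, h', hax, by simp, by simp⟩
    · exact ⟨a, h, y, h', hay, by simp, by simp⟩
    · exact ⟨b, h, x, h', hbx, by simp, by simp⟩
    · exact ⟨b, h, y, h', hby, by simp, by simp⟩

/-- Case of a triangle. -/
lemma key_triangle (G : SimpleGraph V) (f : V → ℕ) (hf : IsOptimalColoring G f)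
    (k : ℕ) (hk : 4 ≤ (univ.filter fun v => f v = k).card)
    (a b c : V) (hab : G.Adj a b) (hbc : G.Adj b c) (hac : G.Adj a c) :
    4 ≤ villainy G := by
  refine key_lemma G f hf k hk {a, b, c} ?_ ?_
  · refine le_trans (Finset.card_insert_le _ _) (Nat.succ_le_succ ?_)
    refine le_trans (Finset.card_insert_le _ _) (Nat.succ_le_succ ?_)
    simp
  · intro S hS
    have h1 := hS a (by simp) b (by simp) hab
    have h2 := hS b (by simp) c (by simp) hbc
    have h3 := hS a (by simp) c (by simp) hac
    rcases h1 with ha | hb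
    · rcases h2 with hb | hc
      · exact ⟨a, ha, b, hb, hab.ne, by simp, by simp⟩
      · exact ⟨a, ha, c, hc, hac.ne, by simp, by simp⟩
    · rcases h3 with ha | hc
      · exact ⟨a, ha, b, hb, hab.ne, by simp, by simp⟩
      · exact ⟨b, hb, c, hc, hbc.ne, by simp, by simp⟩

theorem villainy_ge_four_of_class_four (G : SimpleGraph V)
    (hchi : 3 ≤ chromNum G)
    (f : V → ℕ) (hf : IsOptimalColoring G f)
    (k : ℕ) (hk : 4 ≤ (univ.filter fun v => f v = k).card) :
    4 ≤ villainy G := by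
  classical
  have himg : 3 ≤ (univ.image f).card := hf.2 ▸ hchi
  obtain ⟨p₁, hp₁⟩ := Finset.card_pos.mp (by omega : 0 < (univ.image f).card)
  have h2 : 1 < ((univ.image f).erase p₁).card := by
    rw [Finset.card_erase_of_mem hp₁]; omega
  obtain ⟨p₂, p₃, hp₂e, hp₃e, hne23⟩ := Finset.one_lt_card_iff.mp h2
  obtain ⟨hne21, hp₂⟩ := Finset.mem_erase.mp hp₂e
  obtain ⟨hne31, hp₃⟩ := Finset.mem_erase.mp hp₃e
  have hchi1 : 1 ≤ chromNum G := by omega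
  obtain ⟨u, v, huv, hfu, hfv⟩ := exists_edge_between G f hf hchi1 p₁ p₂ hp₁ hp₂ (Ne.symm hne21)
  obtain ⟨x, y, hxy, hfx, hfy⟩ := exists_edge_between G f hf hchi1 p₁ p₃ hp₁ hp₃ (Ne.symm hne31)
  obtain ⟨z, w, hzw, hfz, hfw⟩ := exists_edge_between G f hf hchi1 p₂ p₃ hp₂ hp₃ hne23
  -- disequalities forced by colors
  have huy : u ≠ y := fun h => hne31 (by rw [← hfy, ← h, hfu])
  have hvx : v ≠ x := fun h => hne21 (by rw [← hfx, ← h, hfv])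
  have hvy : v ≠ y := fun h => hne23 (by rw [← hfy, ← h, hfv])
  have huz : u ≠ z := fun h => hne21 (by rw [← hfu, h, hfz])
  have huw : u ≠ w := fun h => hne31 (by rw [← hfw, ← h, hfu])
  have hvw : v ≠ w := fun h => hne23 (by rw [← hfw, ← h, hfv])
  have hxz : x ≠ z := fun h => hne21 (by rw [← hfx, h, hfz])
  have hxw : x ≠ w := fun h => hne31 (by rw [← hfw, ← h, hfx])
  have hyz : y ≠ z := fun h => hne23 (by rw [← hfy, h, hfz])
  by_cases hux : u = x
  · by_cases hvz : v = z
    · by_cases hyw : y = w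
      · -- triangle u, v, y
        refine key_triangle G f hf k hk u v y huv ?_ ?_
        · rw [hvz, hyw]; exact hzw
        · rw [hux]; exact hxy
      · exact key_matching G f hf k hk x y z w hxy hzw hxz hxw hyz hyw
    · exact key_matching G f hf k hk u v z w huv hzw huz huw hvz hvw
  · exact key_matching G f hf k hk u v x y huv hxy hux huy hvx hvy
end

section
/- The villainy of the disjoint union K_3 + K_2 (a triangle together with a disjoint edge) is 2. -/
open Finset

variable {V : Type*}

variable [Fintype V] [DecidableEq V]

/-! ### Auxiliary material for `villainy_K3_plus_K2` -/

/-- The graph `K₃ + K₂`. -/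
abbrev GG := (⊤ : SimpleGraph (Fin 3)) ⊕g (⊤ : SimpleGraph (Fin 2))

lemma card_filter_comp_perm {W : Type*} [Fintype W] [DecidableEq W]
    (p : W → Prop) [DecidablePred p] (τ : Equiv.Perm W) :
    (univ.filter fun v => p (τ v)).card = (univ.filter p).card := by
  apply Finset.card_bij (fun v _ => τ v)
  · intro v hv; simp_all
  · intro a _ b _ h; exact τ.injective h
  · intro b hb; exact ⟨τ.symm b, by simp_all, by simp⟩

lemma sameColorCounts_comp_perm (c : Fin 3 ⊕ Fin 2 → ℕ) (τ : Equiv.Perm (Fin 3 ⊕ Fin 2)) :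
    SameColorCounts (c ∘ τ) c :=
  fun k => card_filter_comp_perm (fun w => c w = k) τ

lemma proper_of (c : Fin 3 ⊕ Fin 2 → ℕ) (h01 : c (.inl 0) ≠ c (.inl 1))
    (h02 : c (.inl 0) ≠ c (.inl 2)) (h12 : c (.inl 1) ≠ c (.inl 2))
    (he : c (.inr 0) ≠ c (.inr 1)) : IsProperColoring GG c := by
  intro u v huv
  match u, v with
  | .inl a, .inr b => exact absurd huv (by simp)
  | .inr a, .inl b => exact absurd huv (by simp)
  | .inl a, .inl b =>
    have hab : a ≠ b := huv
    fin_cases a <;> fin_cases b <;> simp_all <;> omega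
  | .inr a, .inr b =>
    have hab : a ≠ b := huv
    fin_cases a <;> fin_cases b <;> simp_all <;> omega

lemma recolor_one {W : Type*} [Fintype W] [DecidableEq W] (c c' : W → ℕ)
    (h : (univ.filter fun v => c v ≠ c' v).card = 1) :
    ¬ SameColorCounts c c' := by
  intro hs
  obtain ⟨v, hv⟩ := Finset.card_eq_one.mp h
  have hvne : c v ≠ c' v := by
    have : v ∈ univ.filter fun v => c v ≠ c' v := hv ▸ Finset.mem_singleton_self v
    simpa using this
  have hagree : ∀ w, w ≠ v → c w = c' w := by
    intro w hw
    by_contra hne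
    have : w ∈ univ.filter fun v => c v ≠ c' v := by simpa using hne
    rw [hv] at this; simp at this; exact hw this
  have key : (univ.filter fun w => c' w = c v) = (univ.filter fun w => c w = c v).erase v := by
    ext w
    simp only [Finset.mem_filter, Finset.mem_erase, Finset.mem_univ, true_and]
    constructor
    · intro hw
      have hwv : w ≠ v := by rintro rfl; exact hvne hw.symm
      exact ⟨hwv, (hagree w hwv) ▸ hw⟩
    · rintro ⟨hwv, hw⟩; exact (hagree w hwv) ▸ hw
  have hvmem : v ∈ univ.filter fun w => c w = c v := by simp
  have := hs (c v)
  rw [key, Finset.card_erase_of_mem hvmem] at this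
  have hpos : 0 < (univ.filter fun w => c w = c v).card := Finset.card_pos.mpr ⟨v, hvmem⟩
  omega

/-- Explicit "swap two vertices" modification of a coloring. -/
def sw (g : Fin 3 ⊕ Fin 2 → Fin 3) (u v w : Fin 3 ⊕ Fin 2) : Fin 3 :=
  if w = u then g v else if w = v then g u else g w

lemma g_swap (g : Fin 3 ⊕ Fin 2 → Fin 3) (u v w : Fin 3 ⊕ Fin 2) :
    g (Equiv.swap u v w) = sw g u v w := by
  simp only [sw, Equiv.swap_apply_def]; split_ifs <;> rfl

set_option maxHeartbeats 4000000 in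
set_option maxRecDepth 10000 in
lemma key : ∀ g : Fin 3 ⊕ Fin 2 → Fin 3,
    (∀ i, (univ.filter fun v => g v = i).card ≤ 2) →
    ∃ u v, sw g u v (.inl 0) ≠ sw g u v (.inl 1) ∧ sw g u v (.inl 0) ≠ sw g u v (.inl 2) ∧
      sw g u v (.inl 1) ≠ sw g u v (.inl 2) ∧ sw g u v (.inr 0) ≠ sw g u v (.inr 1) := by
  decide

lemma colorable3 : GG.Colorable 3 := by
  refine ⟨SimpleGraph.Coloring.mk (Sum.elim id ![0, 1]) ?_⟩
  intro u v huv
  match u, v with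
  | .inl a, .inr b => exact absurd huv (by simp)
  | .inr a, .inl b => exact absurd huv (by simp)
  | .inl a, .inl b => have hab : a ≠ b := huv; simpa using hab
  | .inr a, .inr b => have hab : a ≠ b := huv; fin_cases a <;> fin_cases b <;> simp_all

lemma notColorable2 : ¬ GG.Colorable 2 := by
  rintro ⟨C⟩
  have h01 : C (.inl 0) ≠ C (.inl 1) := C.valid (by change (0:Fin 3) ≠ 1; decide)
  have h02 : C (.inl 0) ≠ C (.inl 2) := C.valid (by change (0:Fin 3) ≠ 2; decide)
  have h12 : C (.inl 1) ≠ C (.inl 2) := C.valid (by change (1:Fin 3) ≠ 2; decide)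
  generalize C (Sum.inl 0) = a at *
  generalize C (Sum.inl 1) = b at *
  generalize C (Sum.inl 2) = c at *
  fin_cases a <;> fin_cases b <;> fin_cases c <;> simp_all

lemma chromGG : GG.chromaticNumber = 3 := by
  refine le_antisymm ?_ ?_
  · exact_mod_cast colorable3.chromaticNumber_le
  · by_contra h
    push_neg at h
    have h2 : GG.chromaticNumber ≤ 2 := by
      have : GG.chromaticNumber < (2:ℕ∞) + 1 := by
        have h3 : ((2:ℕ∞) + 1) = 3 := by norm_num
        rw [h3]; exact h
      exact Order.le_of_lt_add_one this
    exact notColorable2 (SimpleGraph.chromaticNumber_le_iff_colorable.mp (by exact_mod_cast h2))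

lemma chromNumGG : chromNum GG = 3 := by
  rw [chromNum, chromGG]; rfl

lemma Minj {A B C : ℕ} (hAB : A ≠ B) (hAC : A ≠ C) (hBC : B ≠ C) :
    Function.Injective ![A, B, C] := by
  intro i j hij
  fin_cases i <;> fin_cases j <;> simp_all

lemma upper_aux (F : Fin 3 ⊕ Fin 2 → ℕ) (A B C : ℕ) (hAB : A ≠ B) (hAC : A ≠ C) (hBC : B ≠ C)
    (hmem : ∀ v, F v = A ∨ F v = B ∨ F v = C)
    (hcount : ∀ k, (univ.filter fun v => F v = k).card ≤ 2) :
    ∃ u v, IsProperColoring GG (F ∘ Equiv.swap u v) := by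
  classical
  set g : Fin 3 ⊕ Fin 2 → Fin 3 := fun v => if F v = A then 0 else if F v = B then 1 else 2
    with hg
  have hFg : ∀ v, F v = ![A, B, C] (g v) := by
    intro v
    rcases hmem v with h | h | h
    · simp [hg, h]
    · simp [hg, h, Ne.symm hAB]
    · simp [hg, h, Ne.symm hAC, Ne.symm hBC]
  have hgfib : ∀ i, (univ.filter fun v => g v = i).card ≤ 2 := by
    intro i
    have hsub : (univ.filter fun v => g v = i) ⊆ (univ.filter fun v => F v = ![A, B, C] i) := by
      intro v hv
      simp only [Finset.mem_filter] at *
      exact ⟨hv.1, by rw [hFg v, hv.2]⟩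
    exact le_trans (Finset.card_le_card hsub) (hcount _)
  obtain ⟨u, v, h1, h2, h3, h4⟩ := key g hgfib
  have hMinj : Function.Injective ![A, B, C] := Minj hAB hAC hBC
  have hswap : ∀ w, (F ∘ Equiv.swap u v) w = ![A, B, C] (sw g u v w) := by
    intro w
    show F (Equiv.swap u v w) = _
    rw [hFg (Equiv.swap u v w), g_swap g u v w]
  refine ⟨u, v, proper_of _ ?_ ?_ ?_ ?_⟩ <;> rw [hswap, hswap]
  · exact fun hh => h1 (hMinj hh)
  · exact fun hh => h2 (hMinj hh)
  · exact fun hh => h3 (hMinj hh)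
  · exact fun hh => h4 (hMinj hh)

lemma upper (f : Fin 3 ⊕ Fin 2 → ℕ) (hf : IsOptimalColoring GG f)
    (σ : Equiv.Perm (Fin 3 ⊕ Fin 2)) : colVillainy GG (f ∘ σ) ≤ 2 := by
  classical
  obtain ⟨hfp, hfcard⟩ := hf
  have hAB : f (.inl 0) ≠ f (.inl 1) := hfp (by change (0:Fin 3) ≠ 1; decide)
  have hAC : f (.inl 0) ≠ f (.inl 2) := hfp (by change (0:Fin 3) ≠ 2; decide)
  have hBC : f (.inl 1) ≠ f (.inl 2) := hfp (by change (1:Fin 3) ≠ 2; decide)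
  have hE : f (.inr 0) ≠ f (.inr 1) := hfp (by change (0:Fin 2) ≠ 1; decide)
  have himg : univ.image f = {f (.inl 0), f (.inl 1), f (.inl 2)} := by
    have hsub : ({f (.inl 0), f (.inl 1), f (.inl 2)} : Finset ℕ) ⊆ univ.image f := by
      intro x hx
      simp only [Finset.mem_insert, Finset.mem_singleton] at hx
      rcases hx with rfl | rfl | rfl <;> exact Finset.mem_image_of_mem f (Finset.mem_univ _)
    have hcard3 : ({f (.inl 0), f (.inl 1), f (.inl 2)} : Finset ℕ).card = 3 := by
      rw [Finset.card_insert_of_notMem (by simp [hAB, hAC]),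
        Finset.card_insert_of_notMem (by simp [hBC]), Finset.card_singleton]
    exact (Finset.eq_of_subset_of_card_le hsub
      (by rw [hfcard, chromNumGG, hcard3])).symm
  have hmem : ∀ v, f (σ v) = f (.inl 0) ∨ f (σ v) = f (.inl 1) ∨ f (σ v) = f (.inl 2) := by
    intro v
    have : f (σ v) ∈ univ.image f := Finset.mem_image_of_mem f (Finset.mem_univ _)
    rw [himg] at this
    simpa using this
  have hcountf : ∀ k, (univ.filter fun v => f v = k).card ≤ 2 := by
    intro k
    rw [Finset.card_filter, Fintype.sum_sum_type, Fin.sum_univ_three, Fin.sum_univ_two]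
    split_ifs <;> omega
  have hcount : ∀ k, (univ.filter fun v => (f ∘ σ) v = k).card ≤ 2 := by
    intro k
    simp only [Function.comp_apply]
    rw [card_filter_comp_perm (fun w => f w = k) σ]
    exact hcountf k
  obtain ⟨u, v, hproper⟩ := upper_aux (f ∘ σ) _ _ _ hAB hAC hBC hmem hcount
  have hscc : SameColorCounts (f ∘ σ) ((f ∘ σ) ∘ Equiv.swap u v) :=
    fun k => (card_filter_comp_perm (fun w => (f ∘ σ) w = k) (Equiv.swap u v)).symm
  have hrec : recolorCount (f ∘ σ) ((f ∘ σ) ∘ Equiv.swap u v) ≤ 2 := by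
    have hsub : (univ.filter fun w => (f ∘ σ) w ≠ ((f ∘ σ) ∘ Equiv.swap u v) w)
        ⊆ ({u, v} : Finset (Fin 3 ⊕ Fin 2)) := by
      intro w hw
      simp only [Finset.mem_filter, Finset.mem_univ, true_and] at hw
      simp only [Finset.mem_insert, Finset.mem_singleton]
      by_contra hc
      push_neg at hc
      exact hw (by simp [Equiv.swap_apply_of_ne_of_ne hc.1 hc.2])
    calc recolorCount (f ∘ σ) ((f ∘ σ) ∘ Equiv.swap u v)
        ≤ ({u, v} : Finset (Fin 3 ⊕ Fin 2)).card := Finset.card_le_card hsub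
      _ ≤ 2 := Finset.card_insert_le _ _ |>.trans (by simp)
  exact le_trans (Nat.sInf_le ⟨(f ∘ σ) ∘ Equiv.swap u v, hproper, hscc, rfl⟩) hrec

/-- The witness optimal coloring: triangle colored 0,1,2; edge colored 0,1. -/
def f0 : Fin 3 ⊕ Fin 2 → ℕ := Sum.elim (fun i => (i : ℕ)) (fun j => (j : ℕ))

/-- The permutation swapping a triangle vertex of color 2 with an edge vertex of color 0. -/
def σ0 : Equiv.Perm (Fin 3 ⊕ Fin 2) := Equiv.swap (.inl 2) (.inr 0)

lemma hf0opt : IsOptimalColoring GG f0 := by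
  constructor
  · exact proper_of _ (by decide) (by decide) (by decide) (by decide)
  · rw [chromNumGG]; decide

lemma colVillainy_c0 : colVillainy GG (f0 ∘ σ0) = 2 := by
  have hmem2 : 2 ∈ {n | ∃ c', IsProperColoring GG c' ∧ SameColorCounts (f0 ∘ σ0) c' ∧
      recolorCount (f0 ∘ σ0) c' = n} := by
    refine ⟨f0, hf0opt.1, sameColorCounts_comp_perm f0 σ0, ?_⟩
    decide
  refine le_antisymm (Nat.sInf_le hmem2) (le_csInf ⟨2, hmem2⟩ ?_)
  rintro m ⟨c', hp, hs, rfl⟩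
  by_contra hlt
  push_neg at hlt
  interval_cases h : recolorCount (f0 ∘ σ0) c'
  · -- zero recolors: c' = f0 ∘ σ0, which is not proper
    have hc' : ∀ w, (f0 ∘ σ0) w = c' w := by
      intro w
      by_contra hne
      have : w ∈ univ.filter fun w => (f0 ∘ σ0) w ≠ c' w := by simpa using hne
      rw [Finset.card_eq_zero.mp h] at this
      simp at this
    have hadj : GG.Adj (.inl 0) (.inl 2) := by change (0:Fin 3) ≠ 2; decide
    have := hp hadj
    rw [← hc', ← hc'] at this
    exact this (by decide)
  · exact recolor_one _ _ h hs

theorem villainy_K3_plus_K2 :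
    villainy ((⊤ : SimpleGraph (Fin 3)) ⊕g (⊤ : SimpleGraph (Fin 2))) = 2 := by
  have hub : ∀ n ∈ {n | ∃ f c, IsOptimalColoring GG f ∧ IsPermutationOf c f ∧
      colVillainy GG c = n}, n ≤ 2 := by
    rintro n ⟨f, c, hopt, ⟨σ, rfl⟩, rfl⟩
    exact upper f hopt σ
  have h2S : 2 ∈ {n | ∃ f c, IsOptimalColoring GG f ∧ IsPermutationOf c f ∧
      colVillainy GG c = n} := ⟨f0, f0 ∘ σ0, hf0opt, ⟨σ0, rfl⟩, colVillainy_c0⟩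
  exact le_antisymm (csSup_le ⟨2, h2S⟩ hub) (le_csSup ⟨2, hub⟩ h2S)
end

section
/- If G is a graph that is not complete and G has a vertex v of degree at most 1 such that G − v is a complete graph on at least 3 vertices, then B(G) = 2. -/
open Finset

variable {V : Type*}

variable [Fintype V] [DecidableEq V]

-- ## auxiliary lemmas

omit [DecidableEq V] in
lemma sameCounts_comp (c : V → ℕ) (σ : Equiv.Perm V) : SameColorCounts c (c ∘ σ) := by
  intro k
  have h : (univ.filter fun v => c v = k)
      = (univ.filter fun v => (c ∘ σ) v = k).map σ.toEmbedding := by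
    ext a
    simp only [Finset.mem_map, mem_filter, mem_univ, true_and, Equiv.coe_toEmbedding,
      Function.comp_apply]
    constructor
    · intro ha; exact ⟨σ.symm a, by simpa using ha, by simp⟩
    · rintro ⟨b, hb, rfl⟩; exact hb
  rw [h, Finset.card_map]

omit [DecidableEq V] in
lemma recolor_zero {c c' : V → ℕ} (h : recolorCount c c' = 0) : c = c' := by
  funext w
  by_contra hw
  have : w ∈ univ.filter fun v => c v ≠ c' v := Finset.mem_filter.mpr ⟨mem_univ w, hw⟩
  rw [Finset.card_eq_zero.mp h] at this
  exact absurd this (Finset.notMem_empty w)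

omit [DecidableEq V] in
lemma not_recolor_one {c c' : V → ℕ} (h : SameColorCounts c c') : recolorCount c c' ≠ 1 := by
  classical
  intro h1
  obtain ⟨z, hz⟩ := Finset.card_eq_one.mp h1
  have hzz : c z ≠ c' z := by
    have : z ∈ univ.filter fun v => c v ≠ c' v := hz ▸ Finset.mem_singleton_self z
    exact (Finset.mem_filter.mp this).2
  have hother : ∀ w, w ≠ z → c w = c' w := by
    intro w hw
    by_contra hcw
    have : w ∈ ({z} : Finset V) := hz ▸ Finset.mem_filter.mpr ⟨mem_univ w, hcw⟩
    exact hw (Finset.mem_singleton.mp this)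
  have key := h (c z)
  have heq : (univ.filter fun w => c' w = c z) = (univ.filter fun w => c w = c z).erase z := by
    ext w
    constructor
    · intro hw
      have hw' := (Finset.mem_filter.mp hw).2
      have hwz : w ≠ z := by rintro rfl; exact hzz hw'.symm
      exact Finset.mem_erase.mpr ⟨hwz, Finset.mem_filter.mpr ⟨mem_univ _,
        (hother w hwz).trans hw'⟩⟩
    · intro hw
      obtain ⟨hwz, hw2⟩ := Finset.mem_erase.mp hw
      exact Finset.mem_filter.mpr ⟨mem_univ _,
        (hother w hwz).symm.trans (Finset.mem_filter.mp hw2).2⟩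
  have hmemz : z ∈ univ.filter fun w => c w = c z := Finset.mem_filter.mpr ⟨mem_univ z, rfl⟩
  have hpos : 0 < (univ.filter fun w => c w = c z).card := Finset.card_pos.mpr ⟨z, hmemz⟩
  rw [heq, Finset.card_erase_of_mem hmemz] at key
  omega

lemma unique_pair {c : V → ℕ} (hc : (univ.image c).card = Fintype.card V - 1)
    (hn : 4 ≤ Fintype.card V) :
    ∃ x y : V, x ≠ y ∧ c x = c y ∧
      ∀ p q : V, p ≠ q → c p = c q → (p = x ∧ q = y) ∨ (p = y ∧ q = x) := by
  have hninj : ¬ Function.Injective c := by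
    intro hinj
    have := Finset.card_image_of_injective (univ : Finset V) hinj
    rw [hc, Finset.card_univ] at this
    omega
  obtain ⟨x, y, hcxy, hxy⟩ := Function.not_injective_iff.mp hninj
  refine ⟨x, y, hxy, hcxy, ?_⟩
  intro p q hpq hcpq
  by_contra hcon
  push_neg at hcon
  obtain ⟨hc1, hc2⟩ := hcon
  obtain ⟨r, r', hrx, hry, hrr', hcrr'⟩ :
      ∃ r r' : V, r ≠ x ∧ r ≠ y ∧ r ≠ r' ∧ c r = c r' := by
    by_cases hp1 : p = x
    · subst hp1
      exact ⟨q, p, hpq.symm, hc1 rfl, hpq.symm, hcpq.symm⟩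
    · by_cases hp2 : p = y
      · subst hp2
        exact ⟨q, p, hc2 rfl, hpq.symm, hpq.symm, hcpq.symm⟩
      · exact ⟨p, q, hp1, hp2, hpq, hcpq⟩
  have hxmem : x ∈ (univ.erase y).erase r :=
    Finset.mem_erase.mpr ⟨hrx.symm, Finset.mem_erase.mpr ⟨hxy, Finset.mem_univ x⟩⟩
  have hsub : univ.image c ⊆ ((univ.erase y).erase r).image c := by
    intro k hk
    obtain ⟨z, _, rfl⟩ := Finset.mem_image.mp hk
    by_cases hz1 : z = y
    · subst hz1
      exact Finset.mem_image.mpr ⟨x, hxmem, hcxy⟩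
    · by_cases hz2 : z = r
      · subst hz2
        by_cases hr'y : r' = y
        · refine Finset.mem_image.mpr ⟨x, hxmem, ?_⟩
          rw [hcrr', hr'y, ← hcxy]
        · refine Finset.mem_image.mpr ⟨r', Finset.mem_erase.mpr ⟨hrr'.symm,
            Finset.mem_erase.mpr ⟨hr'y, Finset.mem_univ r'⟩⟩, hcrr'.symm⟩
      · exact Finset.mem_image.mpr ⟨z, Finset.mem_erase.mpr ⟨hz2,
          Finset.mem_erase.mpr ⟨hz1, Finset.mem_univ z⟩⟩, rfl⟩
  have h1 := (Finset.card_le_card hsub).trans (Finset.card_image_le)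
  have h2 : ((univ.erase y).erase r).card = Fintype.card V - 1 - 1 := by
    rw [Finset.card_erase_of_mem (Finset.mem_erase.mpr ⟨hry, Finset.mem_univ r⟩),
      Finset.card_erase_of_mem (Finset.mem_univ y), Finset.card_univ]
  rw [hc, h2] at h1
  omega

/-- The key swap construction. -/
lemma swap_mem (G : SimpleGraph V) {c : V → ℕ} {x y w : V}
    (hxy : x ≠ y) (hcol : c x = c y)
    (huniq : ∀ p q : V, p ≠ q → c p = c q → (p = x ∧ q = y) ∨ (p = y ∧ q = x))
    (hwx : w ≠ x) (hwy : w ≠ y) (hnadj : ¬ G.Adj y w) :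
    ∃ c', IsProperColoring G c' ∧ SameColorCounts c c' ∧ recolorCount c c' = 2 := by
  have hcw : c w ≠ c x := by
    intro h
    rcases huniq w x hwx h with ⟨_, h2⟩ | ⟨h1, _⟩
    · exact hxy h2
    · exact hwy h1
  refine ⟨c ∘ Equiv.swap x w, ?_, sameCounts_comp c _, ?_⟩
  · intro p q hadj heq
    have hpq : p ≠ q := G.ne_of_adj hadj
    have hne : Equiv.swap x w p ≠ Equiv.swap x w q := fun h => hpq (Equiv.injective _ h)
    have heq' : c (Equiv.swap x w p) = c (Equiv.swap x w q) := heq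
    rcases huniq _ _ hne heq' with ⟨h1, h2⟩ | ⟨h1, h2⟩
    · -- swap p = x, swap q = y  ⇒  p = w, q = y
      have hp : p = w := by
        have := congrArg (Equiv.swap x w) h1
        rwa [Equiv.swap_apply_self, Equiv.swap_apply_left] at this
      have hq : q = y := by
        have := congrArg (Equiv.swap x w) h2
        rwa [Equiv.swap_apply_self, Equiv.swap_apply_of_ne_of_ne hxy.symm hwy.symm] at this
      subst hp; subst hq
      exact hnadj hadj.symm
    · have hp : p = y := by
        have := congrArg (Equiv.swap x w) h1
        rwa [Equiv.swap_apply_self, Equiv.swap_apply_of_ne_of_ne hxy.symm hwy.symm] at this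
      have hq : q = w := by
        have := congrArg (Equiv.swap x w) h2
        rwa [Equiv.swap_apply_self, Equiv.swap_apply_left] at this
      subst hp; subst hq
      exact hnadj hadj
  · have hfil : (univ.filter fun z => c z ≠ (c ∘ Equiv.swap x w) z) = {x, w} := by
      ext z
      simp only [mem_filter, mem_univ, true_and, Finset.mem_insert, Finset.mem_singleton,
        Function.comp_apply]
      constructor
      · intro hz
        by_contra hcon
        push_neg at hcon
        rw [Equiv.swap_apply_of_ne_of_ne hcon.1 hcon.2] at hz
        exact hz rfl
      · rintro (rfl | rfl)
        · rw [Equiv.swap_apply_left]; exact fun h => hcw h.symm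
        · rw [Equiv.swap_apply_right]; exact hcw
    rw [recolorCount, hfil, Finset.card_insert_of_notMem (by simp [hwx.symm]),
      Finset.card_singleton]

lemma two_mem_of_improper (G : SimpleGraph V) [DecidableRel G.Adj]
    (v : V) (hdeg : G.degree v ≤ 1) (hcard : 4 ≤ Fintype.card V)
    {c : V → ℕ} (hc : (univ.image c).card = Fintype.card V - 1)
    (hp : ¬ IsProperColoring G c) :
    ∃ c', IsProperColoring G c' ∧ SameColorCounts c c' ∧ recolorCount c c' = 2 := by
  obtain ⟨x0, y0, hxy0, hcol0, huniq0⟩ := unique_pair hc hcard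
  -- the improper pair must be {x0, y0} and they are adjacent
  have hadj0 : G.Adj x0 y0 := by
    simp only [IsProperColoring, not_forall] at hp
    obtain ⟨p, q, hadj, heq⟩ := hp
    rw [not_not] at heq
    rcases huniq0 p q (G.ne_of_adj hadj) heq with ⟨h1, h2⟩ | ⟨h1, h2⟩
    · rw [h1, h2] at hadj; exact hadj
    · rw [h1, h2] at hadj; exact hadj.symm
  -- a helper to find a non-neighbor of v distinct from two given vertices
  have hpick : ∀ a : V, ∃ w : V, w ≠ a ∧ w ≠ v ∧ ¬ G.Adj v w := by
    intro a
    have hne : (((univ.erase v).erase a) \ G.neighborFinset v).Nonempty := by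
      rw [← Finset.card_pos]
      have h1 : (Fintype.card V - 1 - 1) - G.degree v
          ≤ ((((univ.erase v).erase a)) \ G.neighborFinset v).card := by
        have := Finset.le_card_sdiff (G.neighborFinset v) ((univ.erase v).erase a)
        have hcle : ((univ.erase v).erase a).card ≥ Fintype.card V - 1 - 1 := by
          rcases Finset.card_erase_le (s := univ.erase v) (a := a) with _
          have h3 : (univ.erase v).card = Fintype.card V - 1 := by
            rw [Finset.card_erase_of_mem (Finset.mem_univ v), Finset.card_univ]
          have h4 := Finset.pred_card_le_card_erase (s := univ.erase v) (a := a)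
          omega
        unfold SimpleGraph.degree
        omega
      omega
    obtain ⟨w, hw⟩ := hne
    rw [Finset.mem_sdiff, Finset.mem_erase, Finset.mem_erase] at hw
    exact ⟨w, hw.1.1, hw.1.2.1, fun h => hw.2 ((G.mem_neighborFinset v w).mpr h)⟩
  have hdeg' : ∀ a b : V, G.Adj v a → G.Adj v b → a = b := by
    intro a b ha hb
    exact Finset.card_le_one.mp hdeg a ((G.mem_neighborFinset v a).mpr ha)
      b ((G.mem_neighborFinset v b).mpr hb)
  by_cases hx0 : x0 = v
  · -- pair is (v, y0); swap out y0, bring in w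
    subst hx0
    obtain ⟨w, hw1, hw2, hw3⟩ := hpick y0
    exact swap_mem G hxy0.symm hcol0.symm
      (fun p q h1 h2 => (huniq0 p q h1 h2).symm) hw1 hw2 hw3
  · by_cases hy0 : y0 = v
    · subst hy0
      obtain ⟨w, hw1, hw2, hw3⟩ := hpick x0
      exact swap_mem G hxy0 hcol0 huniq0 hw1 hw2 hw3
    · -- neither is v
      have : ¬ G.Adj v x0 ∨ ¬ G.Adj v y0 := by
        by_contra hcon
        push_neg at hcon
        exact hxy0 (hdeg' x0 y0 hcon.1 hcon.2)
      rcases this with hnx | hny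
      · exact swap_mem G hxy0.symm hcol0.symm
          (fun p q h1 h2 => (huniq0 p q h1 h2).symm) (Ne.symm hy0) (Ne.symm hx0)
          (fun h => hnx h.symm)
      · exact swap_mem G hxy0 hcol0 huniq0 (Ne.symm hx0) (Ne.symm hy0)
          (fun h => hny h.symm)

lemma colVillainy_le_two (G : SimpleGraph V) [DecidableRel G.Adj]
    (v : V) (hdeg : G.degree v ≤ 1) (hcard : 4 ≤ Fintype.card V)
    {c : V → ℕ} (hc : (univ.image c).card = Fintype.card V - 1) :
    colVillainy G c ≤ 2 := by
  by_cases hp : IsProperColoring G c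
  · have h0 : (0 : ℕ) ∈ {n | ∃ c', IsProperColoring G c' ∧ SameColorCounts c c'
        ∧ recolorCount c c' = n} := ⟨c, hp, fun k => rfl, by simp [recolorCount]⟩
    exact (Nat.sInf_le h0).trans (by norm_num)
  · exact Nat.sInf_le (two_mem_of_improper G v hdeg hcard hc hp)

lemma colVillainy_eq_two (G : SimpleGraph V) [DecidableRel G.Adj]
    (v : V) (hdeg : G.degree v ≤ 1) (hcard : 4 ≤ Fintype.card V)
    {c : V → ℕ} (hc : (univ.image c).card = Fintype.card V - 1)
    (hp : ¬ IsProperColoring G c) :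
    colVillainy G c = 2 := by
  set S := {n | ∃ c', IsProperColoring G c' ∧ SameColorCounts c c' ∧ recolorCount c c' = n}
  have h2 : (2 : ℕ) ∈ S := two_mem_of_improper G v hdeg hcard hc hp
  have hle : sInf S ≤ 2 := Nat.sInf_le h2
  have hmem : sInf S ∈ S := Nat.sInf_mem ⟨2, h2⟩
  have h0 : sInf S ≠ 0 := by
    intro h
    rw [h] at hmem
    obtain ⟨c', hp', _, hr'⟩ := hmem
    exact hp (recolor_zero hr' ▸ hp')
  have h1 : sInf S ≠ 1 := by
    intro h
    rw [h] at hmem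
    obtain ⟨c', _, hs', hr'⟩ := hmem
    exact not_recolor_one hs' hr'
  show sInf S = 2
  omega

theorem villainy_eq_two_of_near_complete (G : SimpleGraph V)
    [DecidableRel G.Adj]
    (hnc : ¬ ∀ a b : V, a ≠ b → G.Adj a b)
    (v : V) (hdeg : G.degree v ≤ 1)
    (hcomp : ∀ a b : V, a ≠ v → b ≠ v → a ≠ b → G.Adj a b)
    (hcard : 4 ≤ Fintype.card V) :
    villainy G = 2 := by
  classical
  -- non-neighbor u of v
  have hpick : ∃ u : V, u ≠ v ∧ ¬ G.Adj v u := by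
    have hne : ((univ.erase v) \ G.neighborFinset v).Nonempty := by
      rw [← Finset.card_pos]
      have := Finset.le_card_sdiff (G.neighborFinset v) (univ.erase v)
      have h3 : (univ.erase v).card = Fintype.card V - 1 := by
        rw [Finset.card_erase_of_mem (Finset.mem_univ v), Finset.card_univ]
      unfold SimpleGraph.degree at hdeg
      omega
    obtain ⟨u, hu⟩ := hne
    rw [Finset.mem_sdiff, Finset.mem_erase] at hu
    exact ⟨u, hu.1.1, fun h => hu.2 ((G.mem_neighborFinset v u).mpr h)⟩
  obtain ⟨u, huv, hnadj⟩ := hpick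
  -- the coloring
  have hsc : Fintype.card {x : V // x ≠ v} = Fintype.card V - 1 := by
    simp [Fintype.card_subtype_compl]
  let e : {x : V // x ≠ v} ≃ Fin (Fintype.card V - 1) := Fintype.equivFinOfCardEq hsc
  let f : V → ℕ := fun x => if h : x = v then (e ⟨u, huv⟩ : ℕ) else (e ⟨x, h⟩ : ℕ)
  have hfv : f v = (e ⟨u, huv⟩ : ℕ) := by simp [f]
  have hfne : ∀ (x : V) (hx : x ≠ v), f x = (e ⟨x, hx⟩ : ℕ) := by
    intro x hx; simp [f, hx]
  -- proper
  have hfp : IsProperColoring G f := by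
    intro a b hadj heq
    have hab : a ≠ b := G.ne_of_adj hadj
    by_cases ha : a = v
    · have hb : b ≠ v := fun h => hab (ha.trans h.symm)
      rw [ha, hfv, hfne b hb] at heq
      have hub : u = b := Subtype.ext_iff.mp (e.injective (Fin.val_injective heq))
      rw [ha, ← hub] at hadj
      exact hnadj hadj
    · by_cases hb : b = v
      · rw [hb, hfne a ha, hfv] at heq
        have hau : a = u := Subtype.ext_iff.mp (e.injective (Fin.val_injective heq))
        rw [hb, hau] at hadj
        exact hnadj hadj.symm
      · rw [hfne a ha, hfne b hb] at heq
        exact hab (Subtype.ext_iff.mp (e.injective (Fin.val_injective heq)))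
  -- image
  have himg : univ.image f = univ.image (fun i : Fin (Fintype.card V - 1) => (i : ℕ)) := by
    ext k
    simp only [Finset.mem_image, mem_univ, true_and]
    constructor
    · rintro ⟨x, rfl⟩
      by_cases hx : x = v
      · subst hx; exact ⟨e ⟨u, huv⟩, hfv.symm⟩
      · exact ⟨e ⟨x, hx⟩, (hfne x hx).symm⟩
    · rintro ⟨i, rfl⟩
      obtain ⟨⟨x, hx⟩, hex⟩ := e.surjective i
      exact ⟨x, by rw [hfne x hx, hex]⟩
  have himgcard : (univ.image f).card = Fintype.card V - 1 := by
    rw [himg, Finset.card_image_of_injective _ Fin.val_injective, Finset.card_univ,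
      Fintype.card_fin]
  -- colorable with m colors
  have hcol : G.Colorable (Fintype.card V - 1) := by
    rw [SimpleGraph.colorable_iff_exists_bdd_nat_coloring]
    refine ⟨SimpleGraph.Coloring.mk f (fun {a b} h => hfp h), ?_⟩
    intro x
    show f x < Fintype.card V - 1
    by_cases hx : x = v
    · subst hx; rw [hfv]; exact Fin.is_lt _
    · rw [hfne x hx]; exact Fin.is_lt _
  -- lower bound: clique
  have hclique : G.IsClique (univ.erase v : Finset V) := by
    intro a ha b hb hab
    rw [Finset.coe_erase, Set.mem_diff] at ha hb
    exact hcomp a b (by simpa using ha.2) (by simpa using hb.2) hab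
  have hge : ((Fintype.card V - 1 : ℕ) : ℕ∞) ≤ G.chromaticNumber := by
    have := hclique.card_le_chromaticNumber
    rwa [Finset.card_erase_of_mem (Finset.mem_univ v), Finset.card_univ] at this
  have hchrom : G.chromaticNumber = ((Fintype.card V - 1 : ℕ) : ℕ∞) := by
    refine le_antisymm ?_ hge
    exact hcol.chromaticNumber_le
  have hchromnat : chromNum G = Fintype.card V - 1 := by
    rw [chromNum, hchrom, ENat.toNat_coe]
  have hopt : IsOptimalColoring G f := ⟨hfp, by rw [himgcard, hchromnat]⟩
  clear hnc
  set S := {n | ∃ f c, IsOptimalColoring G f ∧ IsPermutationOf c f ∧ colVillainy G c = n}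
    with hS
  -- every element of S is at most 2
  have hub : ∀ n ∈ S, n ≤ 2 := by
    rintro n ⟨g, c, ⟨hgp, hgcard⟩, ⟨σ, rfl⟩, rfl⟩
    have himgc : univ.image (g ∘ ⇑σ) = univ.image g := by
      ext k
      simp only [Finset.mem_image, mem_univ, true_and, Function.comp_apply]
      constructor
      · rintro ⟨x, rfl⟩; exact ⟨σ x, rfl⟩
      · rintro ⟨x, rfl⟩; exact ⟨σ.symm x, by simp⟩
    have hcc : (univ.image (g ∘ ⇑σ)).card = Fintype.card V - 1 := by
      rw [himgc, hgcard, hchromnat]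
    exact colVillainy_le_two G v hdeg hcard hcc
  -- 2 is attained
  have h2 : (2 : ℕ) ∈ S := by
    obtain ⟨w, hwu, hwv⟩ : ∃ w : V, w ≠ u ∧ w ≠ v := by
      have hne : ((univ.erase v).erase u).Nonempty := by
        rw [← Finset.card_pos]
        have h3 : (univ.erase v).card = Fintype.card V - 1 := by
          rw [Finset.card_erase_of_mem (Finset.mem_univ v), Finset.card_univ]
        have h4 := Finset.pred_card_le_card_erase (s := univ.erase v) (a := u)
        omega
      obtain ⟨w, hw⟩ := hne
      rw [Finset.mem_erase, Finset.mem_erase] at hw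
      exact ⟨w, hw.1, hw.2.1⟩
    set c : V → ℕ := f ∘ ⇑(Equiv.swap v w) with hc
    have himgc : univ.image c = univ.image f := by
      ext k
      simp only [hc, Finset.mem_image, mem_univ, true_and, Function.comp_apply]
      constructor
      · rintro ⟨x, rfl⟩; exact ⟨Equiv.swap v w x, rfl⟩
      · rintro ⟨x, rfl⟩
        exact ⟨Equiv.swap v w x, by rw [Equiv.swap_apply_self]⟩
    have hcc : (univ.image c).card = Fintype.card V - 1 := by
      rw [himgc, himgcard]
    have hcu : c u = (e ⟨u, huv⟩ : ℕ) := by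
      rw [hc]
      show f (Equiv.swap v w u) = _
      rw [Equiv.swap_apply_of_ne_of_ne huv (fun h => hwu h.symm), hfne u huv]
    have hcw : c w = (e ⟨u, huv⟩ : ℕ) := by
      rw [hc]
      show f (Equiv.swap v w w) = _
      rw [Equiv.swap_apply_right, hfv]
    have hadjuw : G.Adj u w := hcomp u w huv hwv (fun h => hwu h.symm)
    have himp : ¬ IsProperColoring G c := fun hp => hp hadjuw (hcu.trans hcw.symm)
    exact ⟨f, c, hopt, ⟨Equiv.swap v w, rfl⟩, colVillainy_eq_two G v hdeg hcard hcc himp⟩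
  exact le_antisymm (csSup_le ⟨2, h2⟩ hub) (le_csSup ⟨2, hub⟩ h2)
end
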